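/- Let R be a commutative ring, let p, q ≥ 1, set n = p + q, and let A be an n×n matrix over R. Let Y be a p×q matrix and Z a q×p matrix over R, and form the block matrices U = [[I_p, Y],[0, I_q]] and V = [[I_p, 0],[Z, I_q]], both n×n. Then for any r, s ∈ {1,…,p}, the minor of U·A·V on the row set {r} ∪ {p+1,…,n} and the column set {s} ∪ {p+1,…,n} equals the minor of A on the same row and column sets. -/
import Mathlib


/-- Multiplying `A` on the left by a block-upper-triangular unipotent matrix
`U = [[1, Y], [0, 1]]` and on the right by a block-lower-triangular unipotent matrix
`V = [[1, 0], [Z, 1]]` does not change the minors on row set `{r} ∪ {p+1,…,n}` and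
column set `{s} ∪ {p+1,…,n}` for `r, s ∈ {1,…,p}`.  Here `{1,…,n} = Fin p ⊕ Fin q`. -/
theorem minor_invariant_under_unipotent_block
    (R : Type*) [CommRing R] (p q : ℕ) (hp : 1 ≤ p) (hq : 1 ≤ q)
    (A : Matrix (Fin p ⊕ Fin q) (Fin p ⊕ Fin q) R)
    (Y : Matrix (Fin p) (Fin q) R) (Z : Matrix (Fin q) (Fin p) R)
    (r s : Fin p) :
    ((Matrix.fromBlocks 1 Y 0 1 * A * Matrix.fromBlocks 1 0 Z 1).submatrix
        (Sum.elim (fun _ : Unit => Sum.inl r) Sum.inr)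
        (Sum.elim (fun _ : Unit => Sum.inl s) Sum.inr)).det =
      (A.submatrix
        (Sum.elim (fun _ : Unit => Sum.inl r) Sum.inr)
        (Sum.elim (fun _ : Unit => Sum.inl s) Sum.inr)).det := by
  set f : Unit ⊕ Fin q → Fin p ⊕ Fin q := Sum.elim (fun _ : Unit => Sum.inl r) Sum.inr with hf
  set g : Unit ⊕ Fin q → Fin p ⊕ Fin q := Sum.elim (fun _ : Unit => Sum.inl s) Sum.inr with hg
  set W : Matrix (Unit ⊕ Fin q) (Unit ⊕ Fin q) R :=
    Matrix.fromBlocks 1 (Matrix.of fun _ j => Y r j) 0 1 with hW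
  set T : Matrix (Unit ⊕ Fin q) (Unit ⊕ Fin q) R :=
    Matrix.fromBlocks 1 0 (Matrix.of fun i _ => Z i s) 1 with hT
  have key : (Matrix.fromBlocks 1 Y 0 1 * A * Matrix.fromBlocks 1 0 Z 1).submatrix f g
      = W * A.submatrix f g * T := by
    ext i j
    rcases i with i | i <;> rcases j with j | j <;>
      simp [hf, hg, hW, hT, Matrix.mul_apply, Fintype.sum_sum_type, Matrix.one_apply,
        Finset.mul_sum, Finset.sum_mul, mul_comm, mul_assoc, mul_left_comm,
        mul_add, Finset.sum_add_distrib]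
    rw [Finset.sum_comm]
  rw [key, Matrix.det_mul, Matrix.det_mul, hW, hT,
    Matrix.det_fromBlocks_zero₂₁, Matrix.det_fromBlocks_zero₁₂]
  simp
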